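/- Suppose 0 ≤ u₀ ∈ L¹(ℝ^N) is measurable, M = ∫ u₀ > 0, and u₀ is supported in B_{R_M}(0) at least up to mass M/2, i.e. ∫_{B_{R_M}(0)} u₀ ≥ M/2 for some R_M > 0. Let K(x) = (1+|x|²)^{-(N+2s)/2}. Then there is k₀ = k₀(N, s, R_M) > 0 such that for all x ∈ ℝ^N, (K * u₀)(x) ≥ k₀ M (1+|x|²)^{-(N+2s)/2}. -/

import Mathlib

open MeasureTheory

theorem stmt7 (N : ℕ) (hN : 1 ≤ N) (s : ℝ) (hs0 : 0 < s) (hs1 : s < 1)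
    (R_M : ℝ) (hR : 0 < R_M) :
    ∃ k₀ : ℝ, 0 < k₀ ∧
      ∀ (u₀ : EuclideanSpace ℝ (Fin N) → ℝ), Measurable u₀ → (∀ y, 0 ≤ u₀ y) →
        Integrable u₀ → 0 < ∫ y, u₀ y →
        (∫ y in Metric.ball (0 : EuclideanSpace ℝ (Fin N)) R_M, u₀ y) ≥ (∫ y, u₀ y) / 2 →
        ∀ x : EuclideanSpace ℝ (Fin N),
          k₀ * (∫ y, u₀ y) * (1 + ‖x‖ ^ 2) ^ (-((N : ℝ) + 2 * s) / 2) ≤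
            ∫ y, (1 + ‖x - y‖ ^ 2) ^ (-((N : ℝ) + 2 * s) / 2) * u₀ y := by
  have hN' : (1:ℝ) ≤ (N:ℝ) := by exact_mod_cast hN
  set p : ℝ := ((N:ℝ) + 2 * s) / 2 with hpdef
  have hp0 : 0 < p := by positivity
  have hexp : -((N : ℝ) + 2 * s) / 2 = -p := by rw [hpdef]; ring
  have hC0 : (0:ℝ) < 2 * (1 + R_M ^ 2) := by positivity
  refine ⟨(2 * (1 + R_M ^ 2)) ^ (-p) / 2, by positivity, ?_⟩
  intro u₀ hmeas hnn hint hM hball x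
  rw [hexp]
  set M := ∫ y, u₀ y with hMdef
  -- pointwise bounds on kernel
  have hbase : ∀ z : EuclideanSpace ℝ (Fin N), (1:ℝ) ≤ 1 + ‖z‖ ^ 2 := by
    intro z; nlinarith [norm_nonneg z, sq_nonneg ‖z‖]
  have hK0 : ∀ z : EuclideanSpace ℝ (Fin N), 0 ≤ (1 + ‖z‖ ^ 2) ^ (-p) := by
    intro z; positivity
  have hK1 : ∀ z : EuclideanSpace ℝ (Fin N), (1 + ‖z‖ ^ 2) ^ (-p) ≤ 1 := by
    intro z
    calc (1 + ‖z‖ ^ 2) ^ (-p) ≤ (1:ℝ) ^ (-p) :=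
          Real.rpow_le_rpow_of_nonpos one_pos (hbase z) (by linarith)
      _ = 1 := Real.one_rpow _
  -- integrability of the integrand
  have hcont : Continuous fun y : EuclideanSpace ℝ (Fin N) => (1 + ‖x - y‖ ^ 2) ^ (-p) := by
    apply Continuous.rpow_const
    · continuity
    · intro y; left; have := hbase (x - y); positivity
  have hintK : Integrable (fun y => (1 + ‖x - y‖ ^ 2) ^ (-p) * u₀ y) := by
    apply Integrable.bdd_mul (c := 1) hint hcont.aestronglyMeasurable
    exact Filter.Eventually.of_forall fun y => by rw [Real.norm_eq_abs, abs_of_nonneg (hK0 _)]; exact hK1 _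
  -- constant on the ball
  set c : ℝ := (2 * (1 + R_M ^ 2)) ^ (-p) * (1 + ‖x‖ ^ 2) ^ (-p) with hcdef
  have hkey : ∀ y ∈ Metric.ball (0 : EuclideanSpace ℝ (Fin N)) R_M,
      c ≤ (1 + ‖x - y‖ ^ 2) ^ (-p) := by
    intro y hy
    have hy' : ‖y‖ ≤ R_M := le_of_lt (by simpa using hy)
    have hxy : ‖x - y‖ ≤ ‖x‖ + R_M := (norm_sub_le x y).trans (by linarith)
    have hle : 1 + ‖x - y‖ ^ 2 ≤ 2 * (1 + R_M ^ 2) * (1 + ‖x‖ ^ 2) := by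
      nlinarith [norm_nonneg x, norm_nonneg (x - y), sq_nonneg (‖x‖ - R_M),
        sq_nonneg (R_M * ‖x‖)]
    have := Real.rpow_le_rpow_of_nonpos (by positivity : (0:ℝ) < 1 + ‖x - y‖ ^ 2) hle
      (by linarith : -p ≤ 0)
    calc c = (2 * (1 + R_M ^ 2) * (1 + ‖x‖ ^ 2)) ^ (-p) := by
            rw [hcdef, ← Real.mul_rpow (le_of_lt hC0) (by positivity)]
      _ ≤ (1 + ‖x - y‖ ^ 2) ^ (-p) := this
  -- chain of inequalities
  have h1 : ∫ y in Metric.ball (0 : EuclideanSpace ℝ (Fin N)) R_M,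
      (1 + ‖x - y‖ ^ 2) ^ (-p) * u₀ y ≤ ∫ y, (1 + ‖x - y‖ ^ 2) ^ (-p) * u₀ y := by
    apply setIntegral_le_integral hintK
    filter_upwards with y
    exact mul_nonneg (hK0 _) (hnn y)
  have h2 : c * ∫ y in Metric.ball (0 : EuclideanSpace ℝ (Fin N)) R_M, u₀ y ≤
      ∫ y in Metric.ball (0 : EuclideanSpace ℝ (Fin N)) R_M,
        (1 + ‖x - y‖ ^ 2) ^ (-p) * u₀ y := by
    rw [← integral_const_mul]
    apply setIntegral_mono_on (hint.integrableOn.const_mul c) hintK.integrableOn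
      measurableSet_ball
    intro y hy
    exact mul_le_mul_of_nonneg_right (hkey y hy) (hnn y)
  have hc0 : 0 ≤ c := by positivity
  have h3 : c * (M / 2) ≤ c * ∫ y in Metric.ball (0 : EuclideanSpace ℝ (Fin N)) R_M, u₀ y :=
    mul_le_mul_of_nonneg_left hball hc0
  have : (2 * (1 + R_M ^ 2)) ^ (-p) / 2 * M * (1 + ‖x‖ ^ 2) ^ (-p) = c * (M / 2) := by
    rw [hcdef]; ring
  linarith
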